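/- arXiv:1906.09822 — 3 statements merged into one kernel-verified Lean document; each statement's English description precedes it below -/
import Mathlib

section
/- If a bibliometric index f satisfies monotonicity, uniform citation, and uniform equivalence, then f satisfies citation increase: if y is obtained from a nonempty citation vector x by adding one citation to every publication (y_i = x_i + 1 for all i), then f(y) > f(x). -/
/-- A citation vector: a finite nonincreasing list of positive integers. -/
def CitVec (x : List ℕ) : Prop :=
  (∀ a ∈ x, 0 < a) ∧ List.Pairwise (· ≥ ·) x

/-- The rec-index: max over 1 ≤ i ≤ n of i·x_i (0 for the empty vector). -/
def recIdx (x : List ℕ) : ℕ :=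
  ((List.range x.length).map (fun i => (i + 1) * x.getD i 0)).foldr max 0

/-- Domination: u ⊑ x. -/
def Dom (u x : List ℕ) : Prop :=
  u.length ≤ x.length ∧ ∀ i < u.length, u.getD i 0 ≤ x.getD i 0

/-- Uniform: all entries equal. -/
def Uniform (x : List ℕ) : Prop := ∀ a ∈ x, ∀ b ∈ x, a = b

/-- x^[k]: add one citation to publication k (1-indexed; append a 1 if k = n+1). -/
def incr (x : List ℕ) (k : ℕ) : List ℕ :=
  if k ≤ x.length then x.set (k - 1) (x.getD (k - 1) 0 + 1) else x ++ [1]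

/-- k is the smallest index j with x_j = x_k (taking x_{n+1} = 0);
equivalently all earlier entries are strictly larger. -/
def MinIndex (x : List ℕ) (k : ℕ) : Prop :=
  1 ≤ k ∧ k ≤ x.length + 1 ∧ ∀ j, 1 ≤ j → j < k → x.getD (k - 1) 0 < x.getD (j - 1) 0

lemma uniform_eq_replicate (u : List ℕ) (h : Uniform u) :
    u = List.replicate u.length (u.getD 0 0) := by
  apply List.eq_replicate_of_mem
  intro b hb
  cases u with
  | nil => simp at hb
  | cons a t => simpa using h b hb a (by simp)

lemma citVec_replicate (n a : ℕ) (ha : 0 < a) : CitVec (List.replicate n a) := by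
  constructor
  · intro b hb; rw [List.eq_of_mem_replicate hb]; exact ha
  · exact List.pairwise_replicate.mpr (by simp)

lemma uniform_replicate (n a : ℕ) : Uniform (List.replicate n a) := by
  intro b hb c hc
  rw [List.eq_of_mem_replicate hb, List.eq_of_mem_replicate hc]

lemma getD_map_succ (x : List ℕ) (i : ℕ) (hi : i < x.length) :
    (x.map (· + 1)).getD i 0 = x.getD i 0 + 1 := by
  rw [List.getD_eq_getElem _ _ (by simpa using hi), List.getD_eq_getElem _ _ hi]
  simp

theorem citation_increase (f : List ℕ → ℝ)
    (hnonneg : ∀ x, CitVec x → 0 ≤ f x) (hbase : f [] = 0)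
    (hM : ∀ x y, CitVec x → CitVec y → Dom x y → f x ≤ f y)
    (hUC : ∀ x, CitVec x → Uniform x → f x = x.sum)
    (hUE : ∀ x, CitVec x → ∃ u, CitVec u ∧ Uniform u ∧ Dom u x ∧ f x = f u) :
    ∀ x, CitVec x → x ≠ [] → f x < f (x.map (· + 1)) := by
  intro x hx hne
  obtain ⟨u, hu, huni, hdom, hfx⟩ := hUE x hx
  set c := u.getD 0 0 with hc
  set m := u.length with hm
  have hurep : u = List.replicate m c := uniform_eq_replicate u huni
  set y := x.map (· + 1) with hy
  have hylen : y.length = x.length := by simp [hy]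
  have hxlen : 0 < x.length := List.length_pos_iff.mpr hne
  have hycv : CitVec y := by
    constructor
    · intro a ha
      simp only [hy, List.mem_map] at ha
      obtain ⟨b, _, rfl⟩ := ha
      omega
    · exact List.Pairwise.map _ (fun a b hab => by simpa using hab) hx.2
  set m' := max m 1 with hm'
  set v := List.replicate m' (c + 1) with hv
  have hvcv : CitVec v := citVec_replicate _ _ (by omega)
  have hdomv : Dom v y := by
    constructor
    · simp only [hv, List.length_replicate, hylen]
      have := hdom.1
      omega
    · intro i hi
      simp only [hv, List.length_replicate] at hi
      have hix : i < x.length := by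
        have := hdom.1; omega
      rw [List.getD_eq_getElem _ _ (by simpa [hv]), hy, getD_map_succ x i hix]
      simp only [hv, List.getElem_replicate]
      have hci : c ≤ x.getD i 0 := by
        by_cases him : i < m
        · exact le_trans (by rw [hurep]; simp [List.getD_eq_getElem, him]) (hdom.2 i him)
        · have hm0 : m = 0 := by omega
          have hun : u = [] := List.length_eq_zero_iff.mp hm0
          simp [hc, hun]
      omega
  have hfu : f u = (m * c : ℕ) := by
    rw [hUC u hu huni, hurep]
    simp [mul_comm]
  have hfv : f v = (m' * (c + 1) : ℕ) := by
    rw [hUC v hvcv (uniform_replicate _ _), hv]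
    simp [mul_comm]
  have hlt : m * c < m' * (c + 1) := by
    have h1 : m ≤ m' := le_max_left m 1
    have h2 : 1 ≤ m' := le_max_right m 1
    nlinarith
  calc f x = f u := hfx
    _ = (m * c : ℕ) := hfu
    _ < (m' * (c + 1) : ℕ) := by exact_mod_cast hlt
    _ = f v := hfv.symm
    _ ≤ f y := hM v y hvcv hycv hdomv
end

section
/- The index f(x) = (rec(x) + ||x||)/2 satisfies monotonicity and uniform citation but does not satisfy uniform equivalence. -/
/-- The index (rec(x) + ||x||)/2. -/
noncomputable def avgIdx (x : List ℕ) : ℝ := ((recIdx x : ℝ) + (x.sum : ℝ)) / 2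

lemma getD_mem {x : List ℕ} {i : ℕ} (h : i < x.length) : x.getD i 0 ∈ x := by
  rw [List.getD_eq_getElem x 0 h]
  exact List.getElem_mem h

lemma sum_eq (x : List ℕ) : x.sum = ∑ i ∈ Finset.range x.length, x.getD i 0 := by
  induction x with
  | nil => simp
  | cons a t ih => simp [Finset.sum_range_succ', ih, add_comm]

lemma foldr_max_le {l : List ℕ} {m : ℕ} (h : ∀ a ∈ l, a ≤ m) : l.foldr max 0 ≤ m := by
  induction l with
  | nil => simp
  | cons a t ih => simpa [max_le_iff] using ⟨h a (by simp), ih fun b hb => h b (by simp [hb])⟩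

lemma le_foldr_max {l : List ℕ} {a : ℕ} (h : a ∈ l) : a ≤ l.foldr max 0 := by
  induction l with
  | nil => cases h
  | cons b t ih =>
    rcases List.mem_cons.mp h with rfl | h
    · exact le_max_left _ _
    · exact le_trans (ih h) (le_max_right _ _)

lemma recIdx_le {x : List ℕ} {m : ℕ} (h : ∀ i < x.length, (i + 1) * x.getD i 0 ≤ m) :
    recIdx x ≤ m := by
  apply foldr_max_le
  intro a ha
  simp only [List.mem_map, List.mem_range] at ha
  obtain ⟨i, hi, rfl⟩ := ha
  exact h i hi

lemma le_recIdx {x : List ℕ} {i : ℕ} (h : i < x.length) :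
    (i + 1) * x.getD i 0 ≤ recIdx x :=
  le_foldr_max (List.mem_map.mpr ⟨i, List.mem_range.mpr h, rfl⟩)

lemma dom_sum {u x : List ℕ} (h : Dom u x) : u.sum ≤ x.sum := by
  rw [sum_eq u, sum_eq x]
  calc ∑ i ∈ Finset.range u.length, u.getD i 0
      ≤ ∑ i ∈ Finset.range u.length, x.getD i 0 :=
        Finset.sum_le_sum fun i hi => h.2 i (Finset.mem_range.mp hi)
    _ ≤ ∑ i ∈ Finset.range x.length, x.getD i 0 :=
        Finset.sum_le_sum_of_subset (Finset.range_subset_range.mpr h.1)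

lemma dom_rec {u x : List ℕ} (h : Dom u x) : recIdx u ≤ recIdx x := by
  apply recIdx_le
  intro i hi
  calc (i + 1) * u.getD i 0 ≤ (i + 1) * x.getD i 0 :=
        Nat.mul_le_mul_left _ (h.2 i hi)
    _ ≤ recIdx x := le_recIdx (lt_of_lt_of_le hi h.1)

lemma uniform_rec {x : List ℕ} (hU : Uniform x) : recIdx x = x.sum := by
  rcases x with _ | ⟨a, t⟩
  · rfl
  · have hall : ∀ i < (a :: t).length, (a :: t).getD i 0 = a :=
      fun i hi => hU _ (getD_mem hi) a (by simp)
    have hsum : (a :: t).sum = (a :: t).length * a := by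
      rw [sum_eq]
      rw [Finset.sum_congr rfl fun i hi => hall i (Finset.mem_range.mp hi)]
      simp [mul_comm]
    rw [hsum]
    apply le_antisymm
    · apply recIdx_le
      intro i hi
      rw [hall i hi]
      exact Nat.mul_le_mul_right _ hi
    · have h := le_recIdx (x := a :: t) (i := t.length) (by simp)
      rwa [hall t.length (by simp)] at h

theorem avg_M_UC_not_UE :
    (∀ x y, CitVec x → CitVec y → Dom x y → avgIdx x ≤ avgIdx y) ∧
    (∀ x, CitVec x → Uniform x → avgIdx x = x.sum) ∧
    ¬ (∀ x, CitVec x → ∃ u, CitVec u ∧ Uniform u ∧ Dom u x ∧ avgIdx x = avgIdx u) := by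
  refine ⟨?_, ?_, ?_⟩
  · intro x y _ _ hD
    have h1 := dom_rec hD
    have h2 := dom_sum hD
    unfold avgIdx
    have h1' : (recIdx x : ℝ) ≤ recIdx y := Nat.cast_le.mpr h1
    have h2' : (x.sum : ℝ) ≤ y.sum := Nat.cast_le.mpr h2
    linarith
  · intro x _ hU
    unfold avgIdx
    rw [uniform_rec hU]
    ring
  · intro h
    obtain ⟨u, hC, hU, hD, hEq⟩ := h [2, 1] ⟨by decide, by decide⟩
    have hx : avgIdx [2, 1] = 5 / 2 := by
      unfold avgIdx
      norm_num [recIdx, List.range_succ]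
    have hu : avgIdx u ≤ 2 := by
      have hlen : u.length ≤ 2 := hD.1
      rcases u with _ | ⟨a, _ | ⟨b, _ | ⟨c, t⟩⟩⟩
      · unfold avgIdx recIdx; norm_num
      · have ha : a ≤ 2 := by simpa using hD.2 0 (by simp)
        have hr : recIdx [a] = a := by simp [recIdx, List.range_succ]
        unfold avgIdx
        rw [hr]
        simp only [List.sum_cons, List.sum_nil]
        have : (a : ℝ) ≤ 2 := by exact_mod_cast ha
        push_cast
        linarith
      · have hab : a = b := hU a (by simp) b (by simp)
        subst hab
        have ha : a ≤ 1 := by simpa using hD.2 1 (by simp)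
        have hr : recIdx [a, a] = 2 * a := by
          unfold recIdx
          simp [List.range_succ, Nat.two_mul, Nat.max_le, le_refl]
        unfold avgIdx
        rw [hr]
        simp only [List.sum_cons, List.sum_nil]
        have : (a : ℝ) ≤ 1 := by exact_mod_cast ha
        push_cast
        linarith
      · simp at hlen
    rw [hEq] at hx
    linarith
end

section
/- For any citation vector x, rec(x) = max{ ||u|| : u a uniform citation vector with u ⊑ x }, i.e. the rec-index equals the maximal total citation count of a uniform vector dominated by x. -/
lemma foldr_max_mem (l : List ℕ) : l.foldr max 0 ∈ l ∨ l.foldr max 0 = 0 := by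
  induction l with
  | nil => simp
  | cons b t ih =>
    rcases le_or_gt (t.foldr max 0) b with h | h
    · left; simp [max_eq_left h]
    · rcases ih with h' | h'
      · left; simp [max_eq_right h.le]; right; exact h'
      · omega

lemma sorted_replicate (n a : ℕ) : List.Pairwise (· ≥ ·) (List.replicate n a) := by
  induction n with
  | zero => simp
  | succ n ih =>
    rw [List.replicate_succ]
    exact List.pairwise_cons.2 ⟨fun b hb => by simp [List.eq_of_mem_replicate hb], ih⟩

theorem rec_eq_max_uniform_sum (x : List ℕ) (hx : CitVec x) :
    IsGreatest {m : ℕ | ∃ u, CitVec u ∧ Uniform u ∧ Dom u x ∧ u.sum = m}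
      (recIdx x) := by
  constructor
  · -- membership
    rcases foldr_max_mem ((List.range x.length).map (fun i => (i + 1) * x.getD i 0)) with h | h
    · rw [List.mem_map] at h
      obtain ⟨i, hi, hval⟩ := h
      rw [List.mem_range] at hi
      refine ⟨List.replicate (i + 1) (x.getD i 0), ?_, ?_, ?_, ?_⟩
      · constructor
        · intro a ha
          rw [List.eq_of_mem_replicate ha]
          rw [List.getD_eq_getElem _ _ hi]
          exact hx.1 _ (List.getElem_mem _)
        · exact sorted_replicate _ _
      · intro a ha b hb
        rw [List.eq_of_mem_replicate ha, List.eq_of_mem_replicate hb]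
      · constructor
        · simpa using hi
        · intro j hj
          simp only [List.length_replicate] at hj
          rw [List.getD_eq_getElem _ _ (by simpa using hj), List.getElem_replicate]
          have hjx : j < x.length := lt_of_lt_of_le hj hi
          rw [List.getD_eq_getElem _ _ hi, List.getD_eq_getElem _ _ hjx]
          rcases eq_or_lt_of_le (Nat.lt_succ_iff.1 hj) with he | hl
          · subst he; exact le_refl _
          · exact List.pairwise_iff_getElem.1 hx.2 _ _ _ _ hl
      · rw [List.sum_replicate, smul_eq_mul]; exact hval
    · rw [Set.mem_setOf_eq]
      refine ⟨[], ⟨by simp, by simp⟩, by simp [Uniform], ⟨Nat.zero_le _, by simp⟩, ?_⟩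
      simpa [recIdx] using h.symm
  · -- upper bound
    rintro m ⟨u, hu, hunif, hdom, hsum⟩
    cases u with
    | nil => simp at hsum; omega
    | cons c t =>
      have hall : ∀ a ∈ c :: t, a = c := fun a ha => hunif a ha c List.mem_cons_self
      have hsum' : (c :: t).sum = (c :: t).length * c := by
        rw [List.sum_eq_card_nsmul _ _ hall, smul_eq_mul]
      set n := (c :: t).length with hn
      have hn1 : 1 ≤ n := by simp [hn]
      have hnx : n ≤ x.length := hdom.1
      have hc : c ≤ x.getD (n - 1) 0 := by
        have := hdom.2 (n - 1) (by omega)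
        have hgu : (c :: t).getD (n - 1) 0 = c := by
          rw [List.getD_eq_getElem _ _ (by omega)]
          exact hall _ (List.getElem_mem _)
        rwa [hgu] at this
      have hmem : ((n - 1) + 1) * x.getD (n - 1) 0 ∈
          (List.range x.length).map (fun i => (i + 1) * x.getD i 0) :=
        List.mem_map.2 ⟨n - 1, List.mem_range.2 (by omega), rfl⟩
      have hle := le_foldr_max hmem
      have : m = n * c := by rw [← hsum, hsum']
      rw [this]
      calc n * c ≤ n * x.getD (n - 1) 0 := Nat.mul_le_mul_left _ hc
        _ = ((n - 1) + 1) * x.getD (n - 1) 0 := by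
            have : (n - 1) + 1 = n := by omega
            rw [this]
        _ ≤ recIdx x := hle
end
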